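/- Let 0 ≤ l < k ≤ n be integers and let λ ∈ Γ_k. Then (l+1) σ_k(λ) σ_{l+1}(λ) − (k+1) σ_{k+1}(λ) σ_l(λ) ≥ (k−l) · (C(n,l)/C(n,k))^{1/(k−l)} · σ_k(λ)^{(k−l+1)/(k−l)} · σ_l(λ)^{(k−l−1)/(k−l)}, with the convention σ_{n+1} = 0 when k = n. -/

import Mathlib

/-- The `k`-th elementary symmetric function of `x` restricted to the index set `s`. -/
noncomputable def sigmaEOn {ι : Type*} [DecidableEq ι] (s : Finset ι) (k : ℕ) (x : ι → ℝ) : ℝ :=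
  ∑ t ∈ s.powersetCard k, ∏ i ∈ t, x i

/-- The `k`-th elementary symmetric function `σ_k(x)`. -/
noncomputable def sigmaE {ι : Type*} [Fintype ι] [DecidableEq ι] (k : ℕ) (x : ι → ℝ) : ℝ :=
  sigmaEOn Finset.univ k x

open Finset Polynomial

lemma sigmaE_zero {ι : Type*} [Fintype ι] [DecidableEq ι] (x : ι → ℝ) : sigmaE 0 x = 1 := by
  simp [sigmaE, sigmaEOn]

lemma sigmaE_of_gt {ι : Type*} [Fintype ι] [DecidableEq ι] (x : ι → ℝ) {k : ℕ}
    (h : Fintype.card ι < k) : sigmaE k x = 0 := by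
  rw [sigmaE, sigmaEOn, Finset.powersetCard_eq_empty.2 (by simpa using h), Finset.sum_empty]

lemma sigmaE_eq_esymm {ι : Type*} [Fintype ι] [DecidableEq ι] (x : ι → ℝ) (k : ℕ) :
    sigmaE k x = (Finset.univ.val.map x).esymm k := by
  rw [sigmaE, sigmaEOn, Finset.esymm_map_val]

/-- complement bijection for elementary symmetric sums -/
lemma sigmaEOn_compl {ι : Type*} [DecidableEq ι] (u : Finset ι) (x : ι → ℝ) (j : ℕ) (hj : j ≤ u.card) :
    sigmaEOn u (u.card - j) x = ∑ s ∈ u.powersetCard j, ∏ i ∈ u \ s, x i := by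
  rw [sigmaEOn]
  refine Finset.sum_nbij' (fun t => u \ t) (fun s => u \ s) ?_ ?_ ?_ ?_ ?_
  · intro t ht
    rw [Finset.mem_powersetCard] at ht ⊢
    exact ⟨Finset.sdiff_subset, by rw [Finset.card_sdiff_of_subset ht.1, ht.2]; omega⟩
  · intro s hs
    rw [Finset.mem_powersetCard] at hs ⊢
    exact ⟨Finset.sdiff_subset, by rw [Finset.card_sdiff_of_subset hs.1, hs.2]⟩
  · intro t ht
    rw [Finset.mem_powersetCard] at ht
    exact Finset.sdiff_sdiff_eq_self ht.1
  · intro s hs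
    rw [Finset.mem_powersetCard] at hs
    exact Finset.sdiff_sdiff_eq_self hs.1
  · intro t ht
    rw [Finset.mem_powersetCard] at ht
    rw [Finset.sdiff_sdiff_eq_self ht.1]

lemma sq_sum_expand {ι : Type*} [DecidableEq ι] (u : Finset ι) (q : ι → ℝ) :
    (∑ i ∈ u, q i) ^ 2 = ∑ i ∈ u, q i ^ 2 + 2 * ∑ s ∈ u.powersetCard 2, ∏ i ∈ s, q i := by
  classical
  induction u using Finset.induction with
  | empty =>
    rw [Finset.powersetCard_eq_empty.2 (by simp)]; simp
  | @insert a u ha ih =>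
    rw [Finset.sum_insert ha, Finset.sum_insert ha, Finset.powersetCard_succ_insert ha,
      Finset.sum_union, Finset.sum_image (fun s hs t ht hst => ?_), add_sq, ih]
    · have h1 : ∑ s ∈ u.powersetCard 1, ∏ i ∈ insert a s, q i
          = q a * ∑ i ∈ u, q i := by
        rw [Finset.mul_sum, Finset.powersetCard_one, Finset.sum_map]
        refine Finset.sum_congr rfl fun i hi => ?_
        have hai : a ≠ i := fun h => ha (h ▸ hi)
        simp only [Function.Embedding.coeFn_mk]
        rw [Finset.prod_insert (by simp [hai]), Finset.prod_singleton]
      rw [h1]; ring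
    · -- injectivity of insert a on subsets of u
      have haS : a ∉ s := fun h => ha ((Finset.mem_powersetCard.1 hs).1 h)
      have haT : a ∉ t := fun h => ha ((Finset.mem_powersetCard.1 ht).1 h)
      calc s = (insert a s).erase a := by rw [Finset.erase_insert haS]
        _ = (insert a t).erase a := by rw [hst]
        _ = t := Finset.erase_insert haT
    · -- disjoint
      rw [Finset.disjoint_left]
      intro s hs hs'
      obtain ⟨t, ht, rfl⟩ := Finset.mem_image.1 hs'
      exact ha ((Finset.mem_powersetCard.1 hs).1 (Finset.mem_insert_self a t))

lemma starF {m : ℕ} (x : Fin m → ℝ) (hm : 2 ≤ m) :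
    2 * m * (sigmaE m x * sigmaE (m - 2) x) ≤ ((m : ℝ) - 1) * sigmaE (m - 1) x ^ 2 := by
  classical
  set q : Fin m → ℝ := fun i => ∏ j ∈ Finset.univ.erase i, x j with hq
  have hcard : (Finset.univ : Finset (Fin m)).card = m := by simp
  -- sigma_{m-1} = sum q
  have h1 : sigmaE (m - 1) x = ∑ i, q i := by
    have h := sigmaEOn_compl (Finset.univ : Finset (Fin m)) x 1 (by omega)
    rw [hcard] at h
    rw [sigmaE, h, Finset.powersetCard_one, Finset.sum_map]
    refine Finset.sum_congr rfl fun i _ => ?_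
    simp only [Function.Embedding.coeFn_mk, hq]
    rw [Finset.erase_eq]
  -- sigma_m = prod over univ
  have h2 : sigmaE m x = ∏ j, x j := by
    rw [sigmaE, sigmaEOn,
      show Finset.univ.powersetCard m = {(Finset.univ : Finset (Fin m))} by
        have := Finset.powersetCard_self (Finset.univ : Finset (Fin m))
        rwa [hcard] at this,
      Finset.sum_singleton]
  -- key identity: 2 σ_m σ_{m-2} = (∑q)^2 - ∑ q^2
  have h3 : sigmaE m x * sigmaE (m - 2) x = ∑ s ∈ Finset.univ.powersetCard 2, ∏ i ∈ s, q i := by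
    have h := sigmaEOn_compl (Finset.univ : Finset (Fin m)) x 2 (by omega)
    rw [hcard] at h
    have h' : sigmaE (m - 2) x = ∑ s ∈ Finset.univ.powersetCard 2, ∏ i ∈ Finset.univ \ s, x i := h
    rw [h', Finset.mul_sum]
    refine Finset.sum_congr rfl fun s hs => ?_
    obtain ⟨i, j, hij, rfl⟩ := Finset.card_eq_two.1 (Finset.mem_powersetCard.1 hs).2
    have hD : (Finset.univ : Finset (Fin m)) \ {i, j} = (Finset.univ.erase i).erase j := by
      ext a; simp [Finset.mem_sdiff, Finset.mem_erase, and_comm]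
    rw [Finset.prod_pair hij, hD, h2]
    simp only [hq]
    have e1 : ∏ j' ∈ Finset.univ.erase i, x j' = x j * ∏ a ∈ (Finset.univ.erase i).erase j, x a :=
      (Finset.mul_prod_erase _ _ (Finset.mem_erase.2 ⟨fun h => hij h.symm, Finset.mem_univ j⟩)).symm
    have e2 : ∏ j' ∈ Finset.univ.erase j, x j' = x i * ∏ a ∈ (Finset.univ.erase j).erase i, x a :=
      (Finset.mul_prod_erase _ _ (Finset.mem_erase.2 ⟨hij, Finset.mem_univ i⟩)).symm
    have e3 : (Finset.univ.erase j).erase i = (Finset.univ.erase i).erase j := by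
      rw [Finset.erase_right_comm]
    have e4 : ∏ j' ∈ (Finset.univ : Finset (Fin m)), x j'
        = x i * ∏ a ∈ Finset.univ.erase i, x a :=
      (Finset.mul_prod_erase _ _ (Finset.mem_univ i)).symm
    rw [e4, e1, e2, e3]; ring
  have h4 := sq_sum_expand (Finset.univ : Finset (Fin m)) q
  have h5 : (∑ i, q i) ^ 2 ≤ (m : ℝ) * ∑ i, q i ^ 2 := by
    have := sq_sum_le_card_mul_sum_sq (s := (Finset.univ : Finset (Fin m))) (f := q)
    simpa [hcard] using this
  have hm1 : (1 : ℝ) ≤ (m : ℝ) := by exact_mod_cast Nat.one_le_of_lt hm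
  rw [h1, h3]
  nlinarith [h4, h5, sq_nonneg (∑ i, q i)]

lemma starM (s : Multiset ℝ) (hm : 2 ≤ Multiset.card s) :
    2 * (Multiset.card s) * (s.esymm (Multiset.card s) * s.esymm (Multiset.card s - 2))
      ≤ ((Multiset.card s : ℝ) - 1) * s.esymm (Multiset.card s - 1) ^ 2 := by
  induction s using Quotient.inductionOn with
  | h l =>
    simp only [Multiset.quot_mk_to_coe] at hm ⊢
    have hs : (Finset.univ.val.map l.get : Multiset ℝ) = (l : Multiset ℝ) := by
      rw [Fin.univ_def]
      show (↑(List.map l.get (List.finRange l.length)) : Multiset ℝ) = ↑l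
      rw [List.map_get_finRange]
    have hc : Multiset.card (l : Multiset ℝ) = l.length := by simp
    have := starF l.get (by rw [hc] at hm; exact hm)
    rw [sigmaE_eq_esymm, sigmaE_eq_esymm, sigmaE_eq_esymm, hs] at this
    rw [hc]
    exact this

lemma newton_poly (i : ℕ) : ∀ (f : ℝ[X]), Multiset.card f.roots = f.natDegree →
    i + 2 ≤ f.natDegree →
    (f.natDegree.choose (i+1) : ℝ)^2 * (f.coeff i * f.coeff (i+2)) ≤
      (f.natDegree.choose i : ℝ) * (f.natDegree.choose (i+2) : ℝ) * f.coeff (i+1)^2 := by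
  induction i with
  | zero =>
    intro f hroots hdeg
    set n := f.natDegree with hn
    have hn2 : 2 ≤ n := hdeg
    set c := f.leadingCoeff with hc
    have c0 : f.coeff 0 = c * (-1)^(n-0) * f.roots.esymm (n-0) :=
      Polynomial.coeff_eq_esymm_roots_of_card hroots (by omega)
    have c1 : f.coeff 1 = c * (-1)^(n-1) * f.roots.esymm (n-1) :=
      Polynomial.coeff_eq_esymm_roots_of_card hroots (by omega)
    have c2 : f.coeff 2 = c * (-1)^(n-2) * f.roots.esymm (n-2) :=
      Polynomial.coeff_eq_esymm_roots_of_card hroots (by omega)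
    have hstar := starM f.roots (by rw [hroots]; exact hn2)
    rw [hroots] at hstar
    set eN := f.roots.esymm n
    set eN1 := f.roots.esymm (n-1)
    set eN2 := f.roots.esymm (n-2)
    -- choose values
    have hch2 : (n.choose 2 : ℝ) * 2 = (n:ℝ) * ((n:ℝ) - 1) := by
      have h2dvd : 2 ∣ n * (n - 1) := by
        rcases Nat.even_or_odd n with he | ho
        · exact Dvd.dvd.mul_right he.two_dvd _
        · have : Even (n - 1) := by rcases ho with ⟨t, ht⟩; exact ⟨t, by omega⟩
          exact Dvd.dvd.mul_left this.two_dvd _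
      have hnat : n.choose 2 * 2 = n * (n - 1) := by
        rw [Nat.choose_two_right, Nat.div_mul_cancel h2dvd]
      have := congrArg (Nat.cast : ℕ → ℝ) hnat
      push_cast [Nat.cast_sub (show 1 ≤ n by omega)] at this
      convert this using 2
    -- signs
    have hu : ((-1:ℝ))^n = (-1:ℝ)^(n-2) := by
      conv_lhs => rw [show n = n - 2 + 2 from by omega]
      rw [pow_add]; norm_num
    have hv : ((-1:ℝ))^(n-1) = -((-1:ℝ)^(n-2)) := by
      conv_lhs => rw [show n - 1 = n - 2 + 1 from by omega]
      rw [pow_succ]; ring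
    have hw : ((-1:ℝ)^(n-2))^2 = (1:ℝ) := by
      rw [← pow_mul, mul_comm, pow_mul]; norm_num
    rw [c0, c1, c2, Nat.choose_one_right, Nat.choose_zero_right, Nat.sub_zero, hu, hv]
    set u := (-1:ℝ)^(n-2)
    have H := mul_le_mul_of_nonneg_left hstar
      (by positivity : (0:ℝ) ≤ (n:ℝ) * c^2)
    have gl : (n:ℝ)^2 * ((c * u * eN) * (c * u * eN2)) = (n:ℝ)^2 * c^2 * (eN * eN2) := by
      linear_combination ((n:ℝ)^2 * c^2 * eN * eN2) * hw
    have gr : ((1:ℕ):ℝ) * (n.choose 2 : ℝ) * (c * -u * eN1)^2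
        = (n.choose 2 : ℝ) * c^2 * eN1^2 := by
      linear_combination ((n.choose 2 : ℝ) * c^2 * eN1^2) * hw
    have h6 : (n.choose 2 : ℝ) * c^2 * eN1^2 * 2 = (n:ℝ) * ((n:ℝ)-1) * (c^2 * eN1^2) := by
      linear_combination (c^2 * eN1^2) * hch2
    calc (n:ℝ)^2 * ((c * u * eN) * (c * u * eN2)) = (n:ℝ)^2 * c^2 * (eN * eN2) := gl
      _ ≤ (n.choose 2 : ℝ) * c^2 * eN1^2 := by nlinarith [H, h6]
      _ = ((1:ℕ):ℝ) * (n.choose 2 : ℝ) * (c * -u * eN1)^2 := gr.symm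
  | succ i ih =>
    intro f hroots hdeg
    set n := f.natDegree with hn
    set g := derivative f with hg
    have h1 : Multiset.card f.roots ≤ Multiset.card g.roots + 1 := f.card_roots_le_derivative
    have h2 : Multiset.card g.roots ≤ g.natDegree := Polynomial.card_roots' g
    have h3 : g.natDegree ≤ n - 1 := Polynomial.natDegree_derivative_le f
    have hgdeg : g.natDegree = n - 1 := by omega
    have hgroots : Multiset.card g.roots = g.natDegree := by omega
    have IH := ih g hgroots (by omega)
    rw [hgdeg] at IH
    have d0 : g.coeff i = f.coeff (i+1) * ((i:ℝ)+1) := by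
      rw [hg, Polynomial.coeff_derivative]
    have d1 : g.coeff (i+1) = f.coeff (i+2) * ((i:ℝ)+2) := by
      rw [hg, Polynomial.coeff_derivative]; push_cast; try ring
    have d2 : g.coeff (i+2) = f.coeff (i+3) * ((i:ℝ)+3) := by
      rw [hg, Polynomial.coeff_derivative]; push_cast; try ring
    rw [d0, d1, d2] at IH
    have hnpos : (0:ℝ) < (n:ℝ) := by exact_mod_cast (show 0 < n by omega)
    have hnne : (n:ℝ) ≠ 0 := ne_of_gt hnpos
    -- choose identities
    have ENat : ∀ t : ℕ, n * (n-1).choose t = n.choose (t+1) * (t+1) := by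
      intro t
      have := Nat.add_one_mul_choose_eq (n-1) t
      rwa [show n - 1 + 1 = n from by omega] at this
    have ER : ∀ t : ℕ, ((n-1).choose t : ℝ) = (n.choose (t+1) : ℝ) * ((t:ℝ)+1) / (n:ℝ) := by
      intro t
      have := congrArg (Nat.cast : ℕ → ℝ) (ENat t)
      push_cast at this
      field_simp
      linarith [this]
    show (n.choose (i+2) : ℝ)^2 * (f.coeff (i+1) * f.coeff (i+3)) ≤
      (n.choose (i+1) : ℝ) * (n.choose (i+3) : ℝ) * f.coeff (i+2)^2
    set A := f.coeff (i+1)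
    set B := f.coeff (i+3)
    set Z := f.coeff (i+2)
    have hF : (0:ℝ) < ((i:ℝ)+1) * ((i:ℝ)+3) * ((i:ℝ)+2)^2 := by positivity
    refine le_of_mul_le_mul_right ?_ hF
    have H := mul_le_mul_of_nonneg_left IH (by positivity : (0:ℝ) ≤ (n:ℝ)^2)
    have keyL : (n.choose (i+2) : ℝ)^2 * (A * B) * (((i:ℝ)+1) * ((i:ℝ)+3) * ((i:ℝ)+2)^2)
        = (n:ℝ)^2 * (((n-1).choose (i+1) : ℝ)^2 * ((A * ((i:ℝ)+1)) * (B * ((i:ℝ)+3)))) := by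
      rw [ER (i+1)]
      push_cast
      field_simp
      ring
    have keyR : (n.choose (i+1) : ℝ) * (n.choose (i+3) : ℝ) * Z^2 * (((i:ℝ)+1) * ((i:ℝ)+3) * ((i:ℝ)+2)^2)
        = (n:ℝ)^2 * (((n-1).choose i : ℝ) * ((n-1).choose (i+2) : ℝ) * (Z * ((i:ℝ)+2))^2) := by
      rw [ER i, ER (i+2)]
      push_cast
      field_simp
      ring
    rw [keyL, keyR]
    exact H

lemma newton_sigma {n : ℕ} (j : ℕ) (x : Fin n → ℝ) (h : j + 2 ≤ n) :
    (n.choose (j+1) : ℝ)^2 * (sigmaE j x * sigmaE (j+2) x)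
      ≤ (n.choose j : ℝ) * (n.choose (j+2) : ℝ) * sigmaE (j+1) x ^ 2 := by
  classical
  set s : Multiset ℝ := Finset.univ.val.map x with hs
  have hcs : Multiset.card s = n := by simp [hs]
  set f : ℝ[X] := (s.map fun a => X - C a).prod with hf
  have hdeg : f.natDegree = n := by
    rw [hf, Polynomial.natDegree_multiset_prod_X_sub_C_eq_card, hcs]
  have hroots : f.roots = s := by rw [hf, Polynomial.roots_multiset_prod_X_sub_C]
  have hcard : Multiset.card f.roots = f.natDegree := by rw [hroots, hcs, hdeg]
  have hnp := newton_poly (n - j - 2) f hcard (by omega)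
  rw [hdeg] at hnp
  have hco : ∀ t : ℕ, t ≤ n → f.coeff (n - t) = (-1)^t * s.esymm t := by
    intro t ht
    have := Multiset.prod_X_sub_C_coeff s (show n - t ≤ Multiset.card s by omega)
    rw [hcs] at this
    rw [show n - (n - t) = t from by omega] at this
    exact this
  have e0 : f.coeff (n - j - 2) = (-1:ℝ)^(j+2) * s.esymm (j+2) := by
    rw [show n - j - 2 = n - (j+2) from by omega]; exact hco (j+2) (by omega)
  have e1 : f.coeff (n - j - 2 + 1) = (-1:ℝ)^(j+1) * s.esymm (j+1) := by
    rw [show n - j - 2 + 1 = n - (j+1) from by omega]; exact hco (j+1) (by omega)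
  have e2 : f.coeff (n - j - 2 + 2) = (-1:ℝ)^j * s.esymm j := by
    rw [show n - j - 2 + 2 = n - j from by omega]; exact hco j (by omega)
  rw [e0, e1, e2] at hnp
  have ch0 : n.choose (n - j - 2 + 1) = n.choose (j+1) := by
    rw [show n - j - 2 + 1 = n - (j+1) from by omega, Nat.choose_symm (by omega)]
  have ch1 : n.choose (n - j - 2) = n.choose (j+2) := by
    rw [show n - j - 2 = n - (j+2) from by omega, Nat.choose_symm (by omega)]
  have ch2 : n.choose (n - j - 2 + 2) = n.choose j := by
    rw [show n - j - 2 + 2 = n - j from by omega, Nat.choose_symm (by omega)]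
  rw [ch0, ch1, ch2] at hnp
  have hsig : ∀ t : ℕ, sigmaE t x = s.esymm t := fun t => sigmaE_eq_esymm x t
  rw [hsig j, hsig (j+1), hsig (j+2)]
  have hw : ((-1:ℝ)^j)^2 = 1 := by rw [← pow_mul, mul_comm, pow_mul]; norm_num
  have hu : (-1:ℝ)^(j+2) = (-1:ℝ)^j := by rw [pow_add]; norm_num
  have hv : (-1:ℝ)^(j+1) = -((-1:ℝ)^j) := by rw [pow_succ]; ring
  rw [hu, hv] at hnp
  nlinarith [hnp, hw]

section chains
variable {P : ℕ → ℝ} {n k : ℕ}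

lemma ratio_mono (hpos : ∀ j, j ≤ k → 0 < P j)
    (hnewton : ∀ j, j + 2 ≤ n → P j * P (j+2) ≤ P (j+1)^2) :
    ∀ a b, a ≤ b → b ≤ k → b + 1 ≤ n → P (b+1) * P a ≤ P b * P (a+1) := by
  intro a b
  induction b with
  | zero =>
    intro hab _ _
    obtain rfl : a = 0 := Nat.le_zero.mp hab
    rw [mul_comm]
  | succ b ihb =>
    intro hab hbk hbn
    rcases Nat.eq_or_lt_of_le hab with rfl | hlt
    · rw [mul_comm]
    · have hab' : a ≤ b := by omega
      have hN := hnewton b (by omega)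
      have hIH := ihb hab' (by omega) (by omega)
      have hPb : 0 < P b := hpos b (by omega)
      have hPb1 : 0 < P (b+1) := hpos (b+1) hbk
      have hPa : 0 < P a := hpos a (by omega)
      have hPa1 : 0 < P (a+1) := hpos (a+1) (by omega)
      have h3 : P (b+1+1) * P a * P b ≤ P (b+1) * P (a+1) * P b := by
        nlinarith [mul_le_mul_of_nonneg_right hN hPa.le,
          mul_le_mul_of_nonneg_left hIH hPb1.le]
      exact le_of_mul_le_mul_right h3 hPb

lemma chain_low (hpos : ∀ j, j ≤ k → 0 < P j)
    (hnewton : ∀ j, j + 2 ≤ n → P j * P (j+2) ≤ P (j+1)^2) (hkn : k ≤ n) {l : ℕ} :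
    ∀ d, l + 1 + d ≤ k → P (l+1+d) * P l ^ d ≤ P (l+1) ^ (d+1) := by
  intro d
  induction d with
  | zero => intro _; simp
  | succ d ihd =>
    intro hdk
    have hR := ratio_mono hpos hnewton l (l+1+d) (by omega) (by omega) (by omega)
    have hIH := ihd (by omega)
    have hPl : 0 < P l := hpos l (by omega)
    have hPl1 : 0 < P (l+1) := hpos (l+1) (by omega)
    have e : l+1+(d+1) = (l+1+d)+1 := by omega
    rw [e]
    calc P ((l+1+d)+1) * P l ^ (d+1) = (P (l+1+d+1) * P l) * P l ^ d := by ring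
      _ ≤ (P (l+1+d) * P (l+1)) * P l ^ d := by
          exact mul_le_mul_of_nonneg_right hR (by positivity)
      _ = P (l+1) * (P (l+1+d) * P l ^ d) := by ring
      _ ≤ P (l+1) * P (l+1) ^ (d+1) := mul_le_mul_of_nonneg_left hIH hPl1.le
      _ = P (l+1) ^ (d+1+1) := by ring

lemma chain_high (hpos : ∀ j, j ≤ k → 0 < P j)
    (hnewton : ∀ j, j + 2 ≤ n → P j * P (j+2) ≤ P (j+1)^2) (hkn : k + 1 ≤ n)
    (hP1 : 0 < P (k+1)) :
    ∀ d, d ≤ k → P (k+1) ^ d * P (k - d) ≤ P k ^ (d+1) := by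
  intro d
  induction d with
  | zero => intro _; simp
  | succ d ihd =>
    intro hdk
    have hR := ratio_mono hpos hnewton (k-d-1) k (by omega) (by omega) hkn
    rw [show k - d - 1 + 1 = k - d from by omega] at hR
    have hIH := ihd (by omega)
    have hPk : 0 < P k := hpos k (by omega)
    calc P (k+1) ^ (d+1) * P (k - (d+1)) = P (k+1) ^ d * (P (k+1) * P (k-d-1)) := by
          rw [show k - (d+1) = k - d - 1 from by omega]; ring
      _ ≤ P (k+1) ^ d * (P k * P (k-d)) := by
          exact mul_le_mul_of_nonneg_left hR (by positivity)
      _ = P k * (P (k+1) ^ d * P (k-d)) := by ring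
      _ ≤ P k * P k ^ (d+1) := mul_le_mul_of_nonneg_left hIH hPk.le
      _ = P k ^ (d+1+1) := by ring

end chains
/-- The Gårding cone `Γ_k ⊆ ℝ^n`. -/
def gardingCone (n k : ℕ) : Set (Fin n → ℝ) :=
  {lam | ∀ j : ℕ, 1 ≤ j → j ≤ k → 0 < sigmaE j lam}

/-- for `λ ∈ Γ_k`,
`(l+1) σ_k σ_{l+1} − (k+1) σ_{k+1} σ_l ≥ (k−l)(C(n,l)/C(n,k))^{1/(k−l)} σ_k^{(k−l+1)/(k−l)} σ_l^{(k−l−1)/(k−l)}`. -/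
theorem sigma_identity_lower_bound (n k l : ℕ) (hlk : l < k) (hkn : k ≤ n)
    (lam : Fin n → ℝ) (hlam : lam ∈ gardingCone n k) :
    ((k : ℝ) - (l : ℝ)) * ((n.choose l : ℝ) / (n.choose k : ℝ)) ^ (1 / ((k : ℝ) - (l : ℝ)))
        * sigmaE k lam ^ (((k : ℝ) - (l : ℝ) + 1) / ((k : ℝ) - (l : ℝ)))
        * sigmaE l lam ^ (((k : ℝ) - (l : ℝ) - 1) / ((k : ℝ) - (l : ℝ)))
      ≤ ((l : ℝ) + 1) * sigmaE k lam * sigmaE (l + 1) lam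
        - ((k : ℝ) + 1) * sigmaE (k + 1) lam * sigmaE l lam := by
  have hpos' : ∀ j : ℕ, 1 ≤ j → j ≤ k → 0 < sigmaE j lam := hlam
  set P : ℕ → ℝ := fun j => sigmaE j lam / (n.choose j : ℝ) with hP
  have hchoose : ∀ j : ℕ, j ≤ n → (0:ℝ) < (n.choose j : ℝ) := fun j hj => by
    exact_mod_cast Nat.choose_pos hj
  have hpos : ∀ j, j ≤ k → 0 < P j := by
    intro j hj
    rcases Nat.eq_zero_or_pos j with rfl | hj1
    · simp [hP, sigmaE_zero]
    · exact div_pos (hpos' j hj1 hj) (hchoose j (le_trans hj hkn))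
  have hnewton : ∀ j, j + 2 ≤ n → P j * P (j+2) ≤ P (j+1)^2 := by
    intro j hj
    have hnp := newton_sigma j lam hj
    have h0 := hchoose j (by omega)
    have h1 := hchoose (j+1) (by omega)
    have h2 := hchoose (j+2) (by omega)
    simp only [hP]
    rw [div_mul_div_comm, div_pow, div_le_div_iff₀ (by positivity) (by positivity)]
    nlinarith [hnp]
  have hsig : ∀ j, j ≤ n → sigmaE j lam = (n.choose j : ℝ) * P j := by
    intro j hj
    have := (hchoose j hj).ne'
    simp only [hP]
    field_simp
  have hsigk1 : sigmaE (k+1) lam = (n.choose (k+1) : ℝ) * P (k+1) := by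
    rcases Nat.lt_or_ge k n with h | h
    · exact hsig (k+1) h
    · have hkn' : k = n := le_antisymm hkn h
      subst hkn'
      have hz : sigmaE (k+1) lam = 0 := sigmaE_of_gt lam (by simp)
      rw [hz]
      simp [hP, hz]
  -- abbreviations
  set m := k - l with hm
  have hm1 : 1 ≤ m := by omega
  have hE : ((m:ℕ):ℝ) = (k:ℝ) - (l:ℝ) := by
    rw [hm, Nat.cast_sub hlk.le]
  set a := P l
  set b := P k
  set c := P (l+1)
  set d := P (k+1)
  have ha : 0 < a := hpos l (by omega)
  have hb : 0 < b := hpos k le_rfl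
  have hc : 0 < c := hpos (l+1) (by omega)
  have hMpos : (0:ℝ) < (m:ℝ) := by exact_mod_cast hm1
  have hMne : ((m:ℝ)) ≠ 0 := hMpos.ne'
  -- chain results
  have h_i : b * a ^ (m-1) ≤ c ^ m := by
    have := chain_low hpos hnewton hkn (l := l) (m-1) (by omega)
    rw [show l+1+(m-1) = k from by omega, show m-1+1 = m from by omega] at this
    exact this
  -- the G quantity
  set G : ℝ := b ^ (((m:ℝ)+1)/(m:ℝ)) * a ^ (((m:ℝ)-1)/(m:ℝ)) with hG
  have hGpos : 0 < G := by
    apply mul_pos <;> exact Real.rpow_pos_of_pos (by assumption) _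
  -- alpha : G ≤ c * b
  have alpha : G ≤ c * b := by
    have h := Real.rpow_le_rpow (by positivity) h_i (by positivity : (0:ℝ) ≤ 1/(m:ℝ))
    rw [Real.mul_rpow hb.le (by positivity), ← Real.rpow_natCast a (m-1),
      ← Real.rpow_natCast c m, ← Real.rpow_mul ha.le, ← Real.rpow_mul hc.le,
      show ((m:ℝ)) * (1/(m:ℝ)) = 1 from by field_simp, Real.rpow_one,
      show (((m-1:ℕ)):ℝ) * (1/(m:ℝ)) = ((m:ℝ)-1)/(m:ℝ) from by
        rw [Nat.cast_sub hm1]; push_cast; ring] at h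
    -- h : b ^ (1/m) * a ^ ((m-1)/m) ≤ c
    have h2 := mul_le_mul_of_nonneg_right h hb.le
    rw [hG]
    calc b ^ (((m:ℝ)+1)/(m:ℝ)) * a ^ (((m:ℝ)-1)/(m:ℝ))
        = (b ^ ((1:ℝ)/(m:ℝ)) * a ^ (((m:ℝ)-1)/(m:ℝ))) * b := by
          rw [show ((m:ℝ)+1)/(m:ℝ) = 1/(m:ℝ) + 1 from by field_simp; try ring,
            Real.rpow_add hb, Real.rpow_one]; ring
      _ ≤ c * b := h2
  -- beta : d * a ≤ G
  have beta : d * a ≤ G := by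
    by_cases hd : 0 < d
    · have hk1n : k + 1 ≤ n := by
        by_contra hcon
        have hkn' : k = n := by omega
        subst hkn'
        have hz : sigmaE (k+1) lam = 0 := sigmaE_of_gt lam (by simp)
        have : d = 0 := by show P (k+1) = 0; simp [hP, hz]
        rw [this] at hd; exact lt_irrefl 0 hd
      have h_ii := chain_high hpos hnewton hk1n hd m (by omega)
      rw [show k - m = l from by omega] at h_ii
      -- h_ii : d ^ m * a ≤ b ^ (m+1)
      have h := Real.rpow_le_rpow (by positivity) h_ii (by positivity : (0:ℝ) ≤ 1/(m:ℝ))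
      rw [Real.mul_rpow (by positivity) ha.le, ← Real.rpow_natCast d m,
        ← Real.rpow_natCast b (m+1), ← Real.rpow_mul hd.le, ← Real.rpow_mul hb.le,
        show ((m:ℝ)) * (1/(m:ℝ)) = 1 from by field_simp, Real.rpow_one,
        show (((m+1:ℕ)):ℝ) * (1/(m:ℝ)) = ((m:ℝ)+1)/(m:ℝ) from by push_cast; ring] at h
      -- h : d * a ^ (1/m) ≤ b ^ ((m+1)/m)
      have h2 := mul_le_mul_of_nonneg_right h
        (Real.rpow_nonneg ha.le (((m:ℝ)-1)/(m:ℝ)))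
      rw [hG]
      calc d * a = (d * a ^ ((1:ℝ)/(m:ℝ))) * a ^ (((m:ℝ)-1)/(m:ℝ)) := by
            rw [mul_assoc, ← Real.rpow_add ha,
              show (1:ℝ)/(m:ℝ) + ((m:ℝ)-1)/(m:ℝ) = 1 from by field_simp; try ring,
              Real.rpow_one]
        _ ≤ b ^ (((m:ℝ)+1)/(m:ℝ)) * a ^ (((m:ℝ)-1)/(m:ℝ)) := h2
    · push_neg at hd
      calc d * a ≤ 0 := mul_nonpos_of_nonpos_of_nonneg hd ha.le
        _ ≤ G := hGpos.le
  -- choose identities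
  have hCl := hchoose l (by omega)
  have hCk := hchoose k hkn
  have I1 : ((l:ℝ)+1) * (n.choose (l+1) : ℝ) = ((n:ℝ) - (l:ℝ)) * (n.choose l : ℝ) := by
    have := congrArg (Nat.cast : ℕ → ℝ) (Nat.choose_succ_right_eq n l)
    push_cast [Nat.cast_sub (show l ≤ n by omega)] at this
    linarith [this]
  have I2 : ((k:ℝ)+1) * (n.choose (k+1) : ℝ) = ((n:ℝ) - (k:ℝ)) * (n.choose k : ℝ) := by
    have := congrArg (Nat.cast : ℕ → ℝ) (Nat.choose_succ_right_eq n k)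
    push_cast [Nat.cast_sub hkn] at this
    linarith [this]
  -- main scalar inequality
  have main : (m:ℝ) * G ≤ ((n:ℝ) - (l:ℝ)) * (c * b) - ((n:ℝ) - (k:ℝ)) * (d * a) := by
    have t1 : ((n:ℝ) - (l:ℝ)) * G ≤ ((n:ℝ) - (l:ℝ)) * (c * b) :=
      mul_le_mul_of_nonneg_left alpha (by
        have : (l:ℝ) ≤ (n:ℝ) := by exact_mod_cast (show l ≤ n by omega)
        linarith)
    have t2 : ((n:ℝ) - (k:ℝ)) * (d * a) ≤ ((n:ℝ) - (k:ℝ)) * G :=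
      mul_le_mul_of_nonneg_left beta (by
        have : (k:ℝ) ≤ (n:ℝ) := by exact_mod_cast hkn
        linarith)
    have hE' : ((n:ℝ) - (l:ℝ)) - ((n:ℝ) - (k:ℝ)) = (m:ℝ) := by rw [hE]; ring
    nlinarith [t1, t2]
  -- rewrite the goal
  rw [← hE]
  rw [hsig l (by omega), hsig (l+1) (by omega), hsig k hkn, hsigk1]
  -- key equality for the left side
  have hCl1 : (n.choose l : ℝ) ^ ((1:ℝ)/(m:ℝ)) * (n.choose l : ℝ) ^ (((m:ℝ)-1)/(m:ℝ))
      = (n.choose l : ℝ) := by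
    rw [← Real.rpow_add hCl, show (1:ℝ)/(m:ℝ) + ((m:ℝ)-1)/(m:ℝ) = 1 from by field_simp; try ring,
      Real.rpow_one]
  have hCk1 : (n.choose k : ℝ) ^ (((m:ℝ)+1)/(m:ℝ))
      = (n.choose k : ℝ) * (n.choose k : ℝ) ^ ((1:ℝ)/(m:ℝ)) := by
    rw [show ((m:ℝ)+1)/(m:ℝ) = 1 + 1/(m:ℝ) from by field_simp; try ring,
      Real.rpow_add hCk, Real.rpow_one]
  have hVne : (n.choose k : ℝ) ^ ((1:ℝ)/(m:ℝ)) ≠ 0 :=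
    (Real.rpow_pos_of_pos hCk _).ne'
  have key : ((n.choose l : ℝ) / (n.choose k : ℝ)) ^ ((1:ℝ)/(m:ℝ))
        * ((n.choose k : ℝ) * b) ^ (((m:ℝ)+1)/(m:ℝ))
        * ((n.choose l : ℝ) * a) ^ (((m:ℝ)-1)/(m:ℝ))
      = (n.choose l : ℝ) * (n.choose k : ℝ) * G := by
    rw [Real.div_rpow hCl.le hCk.le, Real.mul_rpow hCk.le hb.le, Real.mul_rpow hCl.le ha.le,
      hCk1, hG]
    rw [div_mul_eq_mul_div, div_mul_eq_mul_div, div_eq_iff hVne]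
    linear_combination ((n.choose k : ℝ) * (n.choose k : ℝ) ^ ((1:ℝ)/(m:ℝ))
      * b ^ (((m:ℝ)+1)/(m:ℝ)) * a ^ (((m:ℝ)-1)/(m:ℝ))) * hCl1
  calc (m:ℝ) * ((n.choose l : ℝ) / (n.choose k : ℝ)) ^ ((1:ℝ)/(m:ℝ))
        * ((n.choose k : ℝ) * b) ^ (((m:ℝ)+1)/(m:ℝ))
        * ((n.choose l : ℝ) * a) ^ (((m:ℝ)-1)/(m:ℝ))
      = (m:ℝ) * (((n.choose l : ℝ) / (n.choose k : ℝ)) ^ ((1:ℝ)/(m:ℝ))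
        * ((n.choose k : ℝ) * b) ^ (((m:ℝ)+1)/(m:ℝ))
        * ((n.choose l : ℝ) * a) ^ (((m:ℝ)-1)/(m:ℝ))) := by ring
    _ = (m:ℝ) * ((n.choose l : ℝ) * (n.choose k : ℝ) * G) := by rw [key]
    _ ≤ ((n.choose l : ℝ) * (n.choose k : ℝ)) * (((n:ℝ) - (l:ℝ)) * (c * b) - ((n:ℝ) - (k:ℝ)) * (d * a)) := by
        have := mul_le_mul_of_nonneg_left main (by positivity : (0:ℝ) ≤ (n.choose l : ℝ) * (n.choose k : ℝ))
        linarith [this]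
    _ = ((l:ℝ) + 1) * ((n.choose k : ℝ) * b) * ((n.choose (l+1) : ℝ) * c)
        - ((k:ℝ) + 1) * ((n.choose (k+1) : ℝ) * d) * ((n.choose l : ℝ) * a) := by
        linear_combination (-((n.choose k : ℝ) * b * c)) * I1 + ((n.choose l : ℝ) * d * a) * I2
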